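/- Let G=(V,E) be a graph on n vertices, π a 2-partition of V, F⊆V, and F̄=V∖F. Then the profit of flipping F satisfies Δ(F) = 4·c_π(F,F̄) − 2|F||F̄|. -/
import Mathlib


open Finset

variable {V : Type*} [Fintype V] [DecidableEq V]

/-- A 2-partition of the vertex set is given by an indicator `π : V → Bool`
(the two clusters are the preimages of `true` and `false`).
Two vertices `u ≠ v` are in conflict if they are in the same cluster but not adjacent,
or in different clusters but adjacent. -/
def Conflict (G : SimpleGraph V) (π : V → Bool) (u v : V) : Prop :=
  u ≠ v ∧ ((π u = π v) ↔ ¬ G.Adj u v)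

instance (G : SimpleGraph V) [DecidableRel G.Adj] (π : V → Bool) (u v : V) :
    Decidable (Conflict G π u v) := by
  unfold Conflict; infer_instance

/-- `C_π(v)` : the set of vertices in conflict with `v`. -/
def conflictSet (G : SimpleGraph V) [DecidableRel G.Adj] (π : V → Bool) (v : V) : Finset V :=
  Finset.univ.filter (fun u => Conflict G π v u)

/-- `c_π(v)` : the conflict number of `v`. -/
def cNum (G : SimpleGraph V) [DecidableRel G.Adj] (π : V → Bool) (v : V) : ℕ :=
  (conflictSet G π v).card

/-- Flipping the set `F` : moving every vertex of `F` to the other cluster. -/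
def flipSet (π : V → Bool) (F : Finset V) : V → Bool :=
  fun v => if v ∈ F then !(π v) else π v

/-- `h₁(π)` : the total conflict number. -/
def h1 (G : SimpleGraph V) [DecidableRel G.Adj] (π : V → Bool) : ℕ :=
  ∑ v, cNum G π v

/-- `h₂(π)` : the sum of squared conflict numbers. -/
def h2 (G : SimpleGraph V) [DecidableRel G.Adj] (π : V → Bool) : ℕ :=
  ∑ v, (cNum G π v) ^ 2

lemma conflict_symm (G : SimpleGraph V) (π : V → Bool) (u v : V) :
    Conflict G π u v ↔ Conflict G π v u := by
  unfold Conflict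
  rw [G.adj_comm]
  constructor <;> rintro ⟨h1, h2⟩ <;> exact ⟨h1.symm, eq_comm.trans h2⟩

lemma conflict_flip_iff (G : SimpleGraph V) (π : V → Bool) (F : Finset V) (u v : V) :
    Conflict G (flipSet π F) u v ↔
      (u ≠ v ∧ (((u ∈ F ↔ v ∈ F) ↔ (π u = π v)) ↔ ¬ G.Adj u v)) := by
  unfold Conflict flipSet
  by_cases hu : u ∈ F <;> by_cases hv : v ∈ F <;>
    simp [hu, hv] <;> intro _ <;> cases π u <;> cases π v <;> simp <;> tauto

/-- Lemma 1: the profit of flipping `F` satisfies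
`Δ(F) = 4·c_π(F, F̄) − 2·|F|·|F̄|`, where `F̄ = V ∖ F`. -/
theorem profit_flip_eq (G : SimpleGraph V) [DecidableRel G.Adj] (π : V → Bool) (F : Finset V) :
    (h1 G π : ℤ) - (h1 G (flipSet π F) : ℤ) =
      4 * (∑ v ∈ F, ((conflictSet G π v ∩ Fᶜ).card : ℤ)) - 2 * F.card * Fᶜ.card := by
  classical
  set f : V → V → ℤ := fun u v => if Conflict G π u v then 1 else 0 with hf
  have hh1 : ∀ (σ : V → Bool), (h1 G σ : ℤ) =
      ∑ u, ∑ v, (if Conflict G σ u v then (1:ℤ) else 0) := by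
    intro σ
    rw [h1]
    push_cast
    refine Finset.sum_congr rfl fun u _ => ?_
    rw [cNum, conflictSet, Finset.card_filter]
    push_cast
    rfl
  -- pointwise key
  have key : ∀ u v, (if Conflict G π u v then (1:ℤ) else 0) -
      (if Conflict G (flipSet π F) u v then (1:ℤ) else 0) =
      (if (u ∈ F) ≠ (v ∈ F) then 2 * f u v - 1 else 0) := by
    intro u v
    by_cases hm : (u ∈ F) ↔ (v ∈ F)
    · have : Conflict G (flipSet π F) u v ↔ Conflict G π u v := by
        rw [conflict_flip_iff]
        unfold Conflict
        constructor <;> rintro ⟨h1, h2⟩ <;> refine ⟨h1, ?_⟩ <;> tauto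
      simp [this, hf, hm]
    · have hne : u ≠ v := by rintro rfl; exact hm Iff.rfl
      have : Conflict G (flipSet π F) u v ↔ ¬ (π u = π v ↔ ¬ G.Adj u v) := by
        rw [conflict_flip_iff]
        constructor
        · rintro ⟨-, h2⟩; tauto
        · intro h2; exact ⟨hne, by tauto⟩
      by_cases hc : Conflict G π u v
      · have hflip : ¬ Conflict G (flipSet π F) u v := by
          rw [this]; intro h; exact h hc.2
        simp [hc, hflip, hf, hm]
      · have hcc : Conflict G (flipSet π F) u v := by
          rw [‹Conflict G (flipSet π F) u v ↔ _›]
          intro h2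
          exact hc ⟨hne, h2⟩
        simp [hc, hcc, hf, hm]
  rw [hh1, hh1, ← Finset.sum_sub_distrib]
  simp only [← Finset.sum_sub_distrib, key]
  -- split sums over F and Fᶜ
  have split : ∀ g : V → ℤ, ∑ u, g u = ∑ u ∈ F, g u + ∑ u ∈ Fᶜ, g u := by
    intro g; rw [Finset.sum_add_sum_compl]
  rw [split]
  have inner : ∀ u, ∑ v, (if (u ∈ F) ≠ (v ∈ F) then 2 * f u v - 1 else 0) =
      (∑ v ∈ F, (if (u ∈ F) ≠ (v ∈ F) then 2 * f u v - 1 else 0)) +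
      (∑ v ∈ Fᶜ, (if (u ∈ F) ≠ (v ∈ F) then 2 * f u v - 1 else 0)) := by
    intro u; rw [Finset.sum_add_sum_compl]
  have e1 : ∑ u ∈ F, ∑ v, (if (u ∈ F) ≠ (v ∈ F) then 2 * f u v - 1 else 0) =
      ∑ u ∈ F, ∑ v ∈ Fᶜ, (2 * f u v - 1) := by
    refine Finset.sum_congr rfl fun u hu => ?_
    rw [inner]
    have z1 : ∑ v ∈ F, (if (u ∈ F) ≠ (v ∈ F) then 2 * f u v - 1 else 0) = 0 := by
      refine Finset.sum_eq_zero fun v hv => by simp [hu, hv]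
    rw [z1, zero_add]
    refine Finset.sum_congr rfl fun v hv => ?_
    have hv' : v ∉ F := by simpa using hv
    simp [hu, hv']
  have e2 : ∑ u ∈ Fᶜ, ∑ v, (if (u ∈ F) ≠ (v ∈ F) then 2 * f u v - 1 else 0) =
      ∑ u ∈ Fᶜ, ∑ v ∈ F, (2 * f u v - 1) := by
    refine Finset.sum_congr rfl fun u hu => ?_
    have hu' : u ∉ F := by simpa using hu
    rw [inner]
    have z1 : ∑ v ∈ Fᶜ, (if (u ∈ F) ≠ (v ∈ F) then 2 * f u v - 1 else 0) = 0 := by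
      refine Finset.sum_eq_zero fun v hv => by simp [hu', show v ∉ F by simpa using hv]
    rw [z1, add_zero]
    refine Finset.sum_congr rfl fun v hv => by simp [hu', hv]
  rw [e1, e2]
  have e3 : ∑ u ∈ Fᶜ, ∑ v ∈ F, (2 * f u v - 1) = ∑ u ∈ F, ∑ v ∈ Fᶜ, (2 * f u v - 1) := by
    rw [Finset.sum_comm]
    refine Finset.sum_congr rfl fun u _ => Finset.sum_congr rfl fun v _ => ?_
    simp [hf, conflict_symm G π v u]
  rw [e3]
  have e4 : ∀ v, ((conflictSet G π v ∩ Fᶜ).card : ℤ) = ∑ u ∈ Fᶜ, f v u := by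
    intro v
    rw [hf]
    rw [show conflictSet G π v ∩ Fᶜ = Fᶜ.filter (fun u => Conflict G π v u) by
      ext u; simp [conflictSet, and_comm]]
    rw [Finset.card_filter]
    push_cast
    rfl
  simp only [e4]
  have inner2 : ∀ u, ∑ v ∈ Fᶜ, (2 * f u v - 1) = 2 * (∑ v ∈ Fᶜ, f u v) - Fᶜ.card := by
    intro u
    rw [Finset.sum_sub_distrib, ← Finset.mul_sum]
    simp
  simp only [inner2]
  rw [Finset.sum_sub_distrib, ← Finset.mul_sum, Finset.sum_const, nsmul_eq_mul]
  ring
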